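/- Let s, r, ℓ be positive integers, a, b real numbers, and n an integer. There exists a polynomial F in three complex variables (u, v, w) with complex coefficients such that for all u ∈ ℂ and all h ∈ ℝ, F(u, e^{ih}, e^{−ih}) = ∏_{j=1}^{s} (u − e^{i·n·h}·Z_j(h)); that is, the braid polynomial of the rotating lemniscate braid (where the lemniscate figure performs n full rotations as h increases by 2π) is again a polynomial in u, e^{ih} and e^{−ih}. -/

import Mathlib

open Complex Real

/-- The lemniscate braid strand parametrization:
`Z s r ℓ a b j h = a·cos((r·h + 2π(j−1))/s) + i·(b/ℓ)·sin(ℓ·(r·h + 2π(j−1))/s)`. -/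
noncomputable def lemniscateZ (s r ℓ : ℕ) (a b : ℝ) (j : ℕ) (h : ℝ) : ℂ :=
  (a * Real.cos ((r * h + 2 * Real.pi * ((j : ℝ) - 1)) / s) : ℝ) +
    Complex.I * ((b / ℓ) * Real.sin (ℓ * (r * h + 2 * Real.pi * ((j : ℝ) - 1)) / s) : ℝ)

namespace RLB

noncomputable def Efun (s : ℕ) (m : ℤ) : ℝ → ℂ := fun h => Complex.exp (I * m * h / s)

noncomputable def zfun (s r ℓ : ℕ) (a b : ℝ) (n : ℤ) (j : ℕ) : ℝ → ℂ :=
  fun h => Complex.exp (Complex.I * ((n : ℤ) * h : ℝ)) * lemniscateZ s r ℓ a b j h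

set_option maxHeartbeats 1000000 in
theorem zfun_eq (s r ℓ : ℕ) (hs : 0 < s) (hℓ : 0 < ℓ) (a b : ℝ) (n : ℤ) (j : ℕ) :
    ∃ c₁ c₂ c₃ c₄ : ℂ, ∀ h : ℝ, zfun s r ℓ a b n j h =
      c₁ * Efun s (n*s + r) h + c₂ * Efun s (n*s - r) h
      + c₃ * Efun s (n*s + ℓ*r) h - c₄ * Efun s (n*s - ℓ*r) h := by
  have hsC : (s:ℂ) ≠ 0 := Nat.cast_ne_zero.mpr hs.ne'
  have hℓC : (ℓ:ℂ) ≠ 0 := Nat.cast_ne_zero.mpr hℓ.ne'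
  refine ⟨(a:ℂ)/2 * Complex.exp (I*((2*π*((j:ℝ)-1)/s : ℝ) : ℂ)), (a:ℂ)/2 * Complex.exp (-(I*((2*π*((j:ℝ)-1)/s : ℝ) : ℂ))),
    (b:ℂ)/(2*ℓ) * Complex.exp ((ℓ:ℂ)*(I*((2*π*((j:ℝ)-1)/s : ℝ) : ℂ))), (b:ℂ)/(2*ℓ) * Complex.exp (-((ℓ:ℂ)*(I*((2*π*((j:ℝ)-1)/s : ℝ) : ℂ)))), ?_⟩
  intro h
  have e1 : Complex.exp (Complex.I * ((n : ℤ) * h : ℝ)) *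
      Complex.exp ((((r * h + 2 * π * ((j : ℝ) - 1)) / s : ℝ) : ℂ) * I)
      = Complex.exp (I*((2*π*((j:ℝ)-1)/s : ℝ) : ℂ)) * Efun s (n*s + r) h := by
    rw [Efun, ← Complex.exp_add, ← Complex.exp_add]
    congr 1
    push_cast
    field_simp
    ring
  have e2 : Complex.exp (Complex.I * ((n : ℤ) * h : ℝ)) *
      Complex.exp (-((((r * h + 2 * π * ((j : ℝ) - 1)) / s : ℝ) : ℂ)) * I)
      = Complex.exp (-(I*((2*π*((j:ℝ)-1)/s : ℝ) : ℂ))) * Efun s (n*s - r) h := by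
    rw [Efun, ← Complex.exp_add, ← Complex.exp_add]
    congr 1
    push_cast
    field_simp
    ring
  have e3 : Complex.exp (Complex.I * ((n : ℤ) * h : ℝ)) *
      Complex.exp ((((ℓ * (r * h + 2 * π * ((j : ℝ) - 1)) / s : ℝ)) : ℂ) * I)
      = Complex.exp ((ℓ:ℂ)*(I*((2*π*((j:ℝ)-1)/s : ℝ) : ℂ))) * Efun s (n*s + ℓ*r) h := by
    rw [Efun, ← Complex.exp_add, ← Complex.exp_add]
    congr 1
    push_cast
    field_simp
    ring
  have e4 : Complex.exp (Complex.I * ((n : ℤ) * h : ℝ)) *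
      Complex.exp (-((((ℓ * (r * h + 2 * π * ((j : ℝ) - 1)) / s : ℝ)) : ℂ)) * I)
      = Complex.exp (-((ℓ:ℂ)*(I*((2*π*((j:ℝ)-1)/s : ℝ) : ℂ)))) * Efun s (n*s - ℓ*r) h := by
    rw [Efun, ← Complex.exp_add, ← Complex.exp_add]
    congr 1
    push_cast
    field_simp
    ring
  have hkey : ∀ (c z : ℂ), I * (c * Complex.sin z)
      = c * (Complex.exp (z*I) - Complex.exp (-z*I)) / 2 := by
    intro c z
    rw [Complex.sin]
    linear_combination (c * (Complex.exp (-z*I) - Complex.exp (z*I)) / 2) * Complex.I_mul_I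
  rw [zfun, lemniscateZ, Complex.ofReal_mul a, Complex.ofReal_cos, Complex.cos,
    Complex.ofReal_mul (b / ℓ), Complex.ofReal_div b, Complex.ofReal_sin, hkey]
  linear_combination (norm := (simp only [Complex.ofReal_natCast]; ring1)) ((a:ℂ)/2) * e1 + ((a:ℂ)/2) * e2 + ((b:ℂ)/(2*(ℓ:ℂ))) * e3
    - ((b:ℂ)/(2*(ℓ:ℂ))) * e4

theorem Efun_mul (s : ℕ) (m m' : ℤ) : Efun s m * Efun s m' = Efun s (m + m') := by
  funext h
  show Complex.exp _ * Complex.exp _ = Complex.exp _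
  rw [← Complex.exp_add]
  congr 1
  push_cast
  ring

noncomputable def M (s : ℕ) : Submodule ℂ (ℝ → ℂ) := Submodule.span ℂ (Set.range (Efun s))

theorem Efun_mem (s : ℕ) (m : ℤ) : Efun s m ∈ M s := Submodule.subset_span ⟨m, rfl⟩

theorem one_mem_M (s : ℕ) : (1 : ℝ → ℂ) ∈ M s := by
  have h0 : Efun s 0 = 1 := by
    funext h
    show Complex.exp _ = 1
    norm_num [Complex.exp_eq_one_iff]
  rw [← h0]; exact Efun_mem s 0

theorem mul_mem_M {s : ℕ} {f g : ℝ → ℂ} (hf : f ∈ M s) (hg : g ∈ M s) : f * g ∈ M s := by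
  have hle : M s * M s ≤ M s := by
    rw [M, Submodule.span_mul_span]
    apply Submodule.span_le.mpr
    rintro x ⟨f, ⟨m, rfl⟩, g, ⟨m', rfl⟩, rfl⟩
    exact Submodule.subset_span ⟨m + m', (Efun_mul s m m').symm⟩
  exact hle (Submodule.mul_mem_mul hf hg)

theorem zfun_mem (s r ℓ : ℕ) (hs : 0 < s) (hℓ : 0 < ℓ) (a b : ℝ) (n : ℤ) (j : ℕ) :
    zfun s r ℓ a b n j ∈ M s := by
  obtain ⟨c₁, c₂, c₃, c₄, hc⟩ := zfun_eq s r ℓ hs hℓ a b n j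
  have : zfun s r ℓ a b n j =
      c₁ • Efun s (n*s + r) + c₂ • Efun s (n*s - r)
      + c₃ • Efun s (n*s + ℓ*r) - c₄ • Efun s (n*s - ℓ*r) := by
    funext h
    simpa using hc h
  rw [this]
  exact sub_mem (add_mem (add_mem (Submodule.smul_mem _ _ (Efun_mem _ _))
    (Submodule.smul_mem _ _ (Efun_mem _ _))) (Submodule.smul_mem _ _ (Efun_mem _ _)))
    (Submodule.smul_mem _ _ (Efun_mem _ _))

open Polynomial in
theorem coeff_prod_mem (s : ℕ) (t : Finset ℕ) (g : ℕ → ℝ → ℂ)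
    (hg : ∀ j ∈ t, g j ∈ M s) (k : ℕ) :
    (∏ j ∈ t, (Polynomial.X - Polynomial.C (g j))).coeff k ∈ M s := by
  induction t using Finset.induction_on generalizing k with
  | empty =>
    simp only [Finset.prod_empty, Polynomial.coeff_one]
    split
    · exact one_mem_M s
    · exact zero_mem _
  | insert x t' hx ih =>
    rw [Finset.prod_insert hx, sub_mul, Polynomial.coeff_sub]
    have hgx : g x ∈ M s := hg x (Finset.mem_insert_self x t')
    have hg' : ∀ j ∈ t', g j ∈ M s := fun j hj => hg j (Finset.mem_insert_of_mem hj)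
    refine sub_mem ?_ ?_
    · rcases k with _ | k
      · rw [Polynomial.mul_coeff_zero, Polynomial.coeff_X_zero, zero_mul]
        exact zero_mem _
      · rw [Polynomial.coeff_X_mul]
        exact ih hg' k
    · rw [Polynomial.coeff_C_mul]
      exact mul_mem_M hgx (ih hg' k)

theorem zfun_shift (s r ℓ : ℕ) (a b : ℝ) (n : ℤ) (j : ℕ) (h : ℝ) :
    zfun s r ℓ a b n j (h + 2*π) = zfun s r ℓ a b n (j + r) h := by
  rw [zfun, zfun, lemniscateZ, lemniscateZ]
  have e0 : Complex.exp (Complex.I * ((n : ℤ) * (h + 2*π) : ℝ))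
      = Complex.exp (Complex.I * ((n : ℤ) * h : ℝ)) := by
    have e1 : (Complex.I * ((n : ℤ) * (h + 2*π) : ℝ) : ℂ)
        = Complex.I * ((n : ℤ) * h : ℝ) + n * (2*π*Complex.I) := by push_cast; ring
    rw [e1, Complex.exp_add, Complex.exp_int_mul_two_pi_mul_I, mul_one]
  rw [e0]
  have hA : ((r:ℝ) * (h + 2*π) + 2*π*((j:ℝ)-1))/s
      = ((r:ℝ)*h + 2*π*(((j+r:ℕ):ℝ)-1))/s := by push_cast; ring
  have hB : (ℓ:ℝ) * ((r:ℝ) * (h + 2*π) + 2*π*((j:ℝ)-1))/s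
      = (ℓ:ℝ) * ((r:ℝ)*h + 2*π*(((j+r:ℕ):ℝ)-1))/s := by push_cast; ring
  rw [hA, hB]

theorem zfun_jper (s r ℓ : ℕ) (hs : 0 < s) (a b : ℝ) (n : ℤ) (j : ℕ) :
    zfun s r ℓ a b n (j + s) = zfun s r ℓ a b n j := by
  funext h
  have hs' : (s:ℝ) ≠ 0 := Nat.cast_ne_zero.mpr hs.ne'
  rw [zfun, zfun, lemniscateZ, lemniscateZ]
  have hA : ((r:ℝ)*h + 2*π*(((j+s:ℕ):ℝ)-1))/s = ((r:ℝ)*h + 2*π*((j:ℝ)-1))/s + 2*π := by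
    push_cast; field_simp; ring
  have hB : (ℓ:ℝ)*((r:ℝ)*h + 2*π*(((j+s:ℕ):ℝ)-1))/s
      = (ℓ:ℝ)*((r:ℝ)*h + 2*π*((j:ℝ)-1))/s + (ℓ:ℤ)*(2*π) := by
    push_cast; field_simp; ring
  rw [hA, hB, Real.cos_add_two_pi, Real.sin_add_int_mul_two_pi]

theorem prod_shift {α : Type*} [CommMonoid α] (s r : ℕ) (hs : 0 < s) (v : ℕ → α)
    (hv : ∀ j, v (j + s) = v j) :
    ∏ j ∈ Finset.Icc 1 s, v (j + r) = ∏ j ∈ Finset.Icc 1 s, v j := by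
  haveI : NeZero s := ⟨hs.ne'⟩
  have hmod : ∀ m, v (m % s + 1) = v (m + 1) := by
    intro m
    induction m using Nat.strong_induction_on with
    | _ m ih =>
      rcases lt_or_ge m s with hm | hm
      · rw [Nat.mod_eq_of_lt hm]
      · obtain ⟨m', rfl⟩ : ∃ m', m = m' + s := ⟨m - s, by omega⟩
        rw [Nat.add_mod_right, ih m' (by omega), show m' + s + 1 = (m' + 1) + s by ring,
          hv (m' + 1)]
  have key : ∀ (c : ℕ), ∏ j ∈ Finset.Icc 1 s, v (j + c)
      = ∏ x : ZMod s, v ((x + (c : ZMod s)).val + 1) := by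
    intro c
    refine Finset.prod_bij' (fun j _ => ((j - 1 : ℕ) : ZMod s))
      (fun x _ => x.val + 1) (fun a ha => Finset.mem_univ _) (fun x _ => ?_) ?_ ?_ ?_
    · simp only [Finset.mem_Icc]
      have := ZMod.val_lt x
      omega
    · intro j hj
      simp only [Finset.mem_Icc] at hj
      beta_reduce
      rw [ZMod.val_natCast, Nat.mod_eq_of_lt (by omega)]
      omega
    · intro x _
      beta_reduce
      simp only [Nat.add_sub_cancel, ZMod.natCast_val, ZMod.cast_id]
    · intro j hj
      simp only [Finset.mem_Icc] at hj
      beta_reduce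
      have hval : (((j - 1 : ℕ) : ZMod s) + (c : ZMod s)).val = ((j - 1) + c) % s := by
        rw [ZMod.val_add, ZMod.val_natCast, ZMod.val_natCast, ← Nat.add_mod]
      rw [hval, hmod, show j - 1 + c + 1 = j + c by omega]
  rw [key r]
  have h2 : ∏ x : ZMod s, v ((x + (r : ZMod s)).val + 1)
      = ∏ x : ZMod s, v (x.val + 1) :=
    Equiv.prod_comp (Equiv.addRight (r : ZMod s)) (fun x => v (x.val + 1))
  rw [h2]
  have h3 := key 0
  simp only [Nat.cast_zero, add_zero] at h3
  rw [h3]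

theorem Efun_li (s : ℕ) (hs : 0 < s) : LinearIndependent ℂ (Efun s) := by
  have hsR : (s:ℝ) ≠ 0 := Nat.cast_ne_zero.mpr hs.ne'
  let χ : ℤ → (Multiplicative ℝ →* ℂ) := fun m =>
    { toFun := fun x => Complex.exp (Complex.I * m * (Multiplicative.toAdd x) / s)
      map_one' := by
        show Complex.exp (Complex.I * m * ((0:ℝ)) / s) = 1
        norm_num
      map_mul' := by
        intro x y
        show Complex.exp (Complex.I * m * ((Multiplicative.toAdd x + Multiplicative.toAdd y : ℝ)) / s) = _
        rw [← Complex.exp_add]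
        congr 1
        push_cast
        ring }
  have hinj : Function.Injective χ := by
    intro m m' hmm'
    by_contra hne
    have hd : ((m:ℝ) - m') ≠ 0 := by
      intro hcon
      apply hne
      exact_mod_cast sub_eq_zero.mp hcon
    set X : ℝ := (s:ℝ)*π/((m:ℝ)-(m':ℝ)) with hX
    have h1 := DFunLike.congr_fun hmm' (Multiplicative.ofAdd X)
    simp only [χ, MonoidHom.coe_mk, OneHom.coe_mk, toAdd_ofAdd] at h1
    have h2 : Complex.exp (Complex.I * m * X / s - Complex.I * m' * X / s) = 1 := by
      rw [Complex.exp_sub, h1, div_self (Complex.exp_ne_zero _)]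
    have h3 : (Complex.I * m * X / s - Complex.I * m' * X / s : ℂ) = π * Complex.I := by
      rw [hX]
      push_cast
      have hdC : ((m:ℂ) - m') ≠ 0 := by
        intro hcon
        apply hd
        exact_mod_cast hcon
      have hsC : (s:ℂ) ≠ 0 := Nat.cast_ne_zero.mpr hs.ne'
      field_simp
    rw [h3, Complex.exp_pi_mul_I] at h2
    norm_num at h2
  have li := (linearIndependent_monoidHom (Multiplicative ℝ) ℂ).comp χ hinj
  exact li

noncomputable def Gpoly (m : ℤ) : MvPolynomial (Fin 3) ℂ :=
  if 0 ≤ m then (MvPolynomial.X 1)^(m.toNat) else (MvPolynomial.X 2)^((-m).toNat)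

theorem Gpoly_eval (m : ℤ) (u : ℂ) (h : ℝ) :
    MvPolynomial.eval ![u, Complex.exp (Complex.I*h), Complex.exp (-(Complex.I*h))] (Gpoly m)
      = Complex.exp (Complex.I*m*h) := by
  rw [Gpoly]
  split_ifs with hm
  · rw [map_pow, MvPolynomial.eval_X]
    show (Complex.exp (Complex.I*h))^(m.toNat) = _
    rw [← Complex.exp_nat_mul]
    congr 1
    rw [show ((m.toNat : ℂ)) = (m : ℂ) by exact_mod_cast congrArg Int.cast (Int.toNat_of_nonneg hm)]
    ring
  · rw [map_pow, MvPolynomial.eval_X]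
    show (Complex.exp (-(Complex.I*h)))^((-m).toNat) = _
    rw [← Complex.exp_nat_mul]
    congr 1
    rw [show (((-m).toNat : ℂ)) = -(m : ℂ) by
      exact_mod_cast congrArg Int.cast (Int.toNat_of_nonneg (by omega : (0:ℤ) ≤ -m))]
    ring

end RLB


open RLB in
set_option maxHeartbeats 1000000 in
/-- The braid polynomial of the rotating lemniscate braid, whose strands are
`e^{inh}·Z_j(h)`, is again a polynomial in `u`, `e^{ih}` and `e^{−ih}`. -/
theorem rotating_lemniscate_braid_polynomial (s r ℓ : ℕ) (hs : 0 < s) (hr : 0 < r)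
    (hℓ : 0 < ℓ) (a b : ℝ) (n : ℤ) :
    ∃ F : MvPolynomial (Fin 3) ℂ,
      ∀ (u : ℂ) (h : ℝ),
        MvPolynomial.eval
            ![u, Complex.exp (Complex.I * h), Complex.exp (-(Complex.I * h))] F =
          ∏ j ∈ Finset.Icc 1 s,
            (u - Complex.exp (Complex.I * (n * h : ℝ)) * lemniscateZ s r ℓ a b j h) := by
  classical
  haveI : NeZero s := ⟨hs.ne'⟩
  have hsC : (s:ℂ) ≠ 0 := Nat.cast_ne_zero.mpr hs.ne'
  set z : ℕ → ℝ → ℂ := zfun s r ℓ a b n with hz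
  set P : Polynomial (ℝ → ℂ) := ∏ j ∈ Finset.Icc 1 s, (Polynomial.X - Polynomial.C (z j))
    with hP
  have hlink : ∀ (h : ℝ) (k : ℕ), P.coeff k h
      = (∏ j ∈ Finset.Icc 1 s, (Polynomial.X - Polynomial.C (z j h))).coeff k := by
    intro h k
    have hm : Polynomial.map (Pi.evalRingHom (fun _ : ℝ => ℂ) h) P
        = ∏ j ∈ Finset.Icc 1 s, (Polynomial.X - Polynomial.C (z j h)) := by
      rw [hP, Polynomial.map_prod]
      refine Finset.prod_congr rfl fun j _ => ?_
      rw [Polynomial.map_sub, Polynomial.map_X, Polynomial.map_C]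
      rfl
    rw [← hm, Polynomial.coeff_map]
    rfl
  have hper : ∀ (k : ℕ) (h : ℝ), P.coeff k (h + 2*π) = P.coeff k h := by
    intro k h
    rw [hlink, hlink]
    congr 1
    calc ∏ j ∈ Finset.Icc 1 s, (Polynomial.X - Polynomial.C (z j (h + 2*π)))
        = ∏ j ∈ Finset.Icc 1 s, (Polynomial.X - Polynomial.C (z (j + r) h)) := by
          refine Finset.prod_congr rfl fun j _ => ?_
          rw [hz, zfun_shift]
      _ = ∏ j ∈ Finset.Icc 1 s, (Polynomial.X - Polynomial.C (z j h)) := by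
          refine prod_shift s r hs (fun j => Polynomial.X - Polynomial.C (z j h)) fun j => ?_
          beta_reduce
          rw [show z (j + s) = z j from by rw [hz]; exact zfun_jper s r ℓ hs a b n j]
  have hgood : ∀ k : ℕ, ∃ F : MvPolynomial (Fin 3) ℂ, ∀ (u : ℂ) (h : ℝ),
      MvPolynomial.eval ![u, Complex.exp (Complex.I*h), Complex.exp (-(Complex.I*h))] F
        = P.coeff k h := by
    intro k
    have hmem : P.coeff k ∈ M s := by
      rw [hP]
      exact coeff_prod_mem s _ _ (fun j _ => zfun_mem s r ℓ hs hℓ a b n j) k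
    rw [M, Finsupp.mem_span_range_iff_exists_finsupp] at hmem
    obtain ⟨c, hc⟩ := hmem
    have hcpt : ∀ h : ℝ, P.coeff k h = ∑ m ∈ c.support, c m * Efun s m h := by
      intro h
      rw [← hc, Finsupp.sum, Finset.sum_apply]
      rfl
    have li := Efun_li s hs
    have hsum : ∑ m ∈ c.support,
        (c m * (Complex.exp (2*π*Complex.I*m/s) - 1)) • Efun s m = 0 := by
      funext h
      rw [Finset.sum_apply]
      have hshift : ∀ m : ℤ, Efun s m (h + 2*π)
          = Complex.exp (2*π*Complex.I*m/s) * Efun s m h := by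
        intro m
        simp only [Efun]
        rw [← Complex.exp_add]
        congr 1
        push_cast
        ring
      have e1 : ∑ m ∈ c.support, ((c m * (Complex.exp (2*π*Complex.I*m/s) - 1)) • Efun s m) h
          = (∑ m ∈ c.support, c m * Efun s m (h+2*π)) - ∑ m ∈ c.support, c m * Efun s m h := by
        rw [← Finset.sum_sub_distrib]
        refine Finset.sum_congr rfl fun m _ => ?_
        rw [hshift m]
        show (c m * (Complex.exp _ - 1)) * Efun s m h = _
        ring
      rw [e1, ← hcpt, ← hcpt, hper k h, sub_self]
      rfl
    have hvan := linearIndependent_iff'.mp li c.support _ hsum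
    have hdvd : ∀ m ∈ c.support, (s:ℤ) ∣ m := by
      intro m hm
      by_contra hnd
      have hne1 : Complex.exp (2*π*Complex.I*m/s) - 1 ≠ 0 := by
        rw [sub_ne_zero]
        intro heq
        rw [Complex.exp_eq_one_iff] at heq
        obtain ⟨q, hq⟩ := heq
        apply hnd
        have hpi : (2*(π:ℂ)*Complex.I) ≠ 0 := by
          simp [Complex.I_ne_zero, Complex.ofReal_ne_zero, Real.pi_ne_zero]
        have h2 : (2*(π:ℂ)*Complex.I) * ((m:ℂ)/s) = (2*(π:ℂ)*Complex.I) * q := by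
          linear_combination hq
        have h3 := mul_left_cancel₀ hpi h2
        rw [div_eq_iff hsC] at h3
        have h4 : m = q * s := by exact_mod_cast h3
        exact ⟨q, by rw [h4, mul_comm]⟩
      have h0 := hvan m hm
      rcases mul_eq_zero.mp h0 with h0' | h0'
      · exact (Finsupp.mem_support_iff.mp hm) h0'
      · exact hne1 h0'
    refine ⟨∑ m ∈ c.support, MvPolynomial.C (c m) * Gpoly (m / s), ?_⟩
    intro u h
    rw [map_sum, hcpt]
    refine Finset.sum_congr rfl fun m hm => ?_
    rw [map_mul, MvPolynomial.eval_C, Gpoly_eval]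
    congr 1
    obtain ⟨q, rfl⟩ := hdvd m hm
    rw [Int.mul_ediv_cancel_left _ (by exact_mod_cast hs.ne' : (s:ℤ) ≠ 0)]
    simp only [Efun]
    congr 1
    push_cast
    field_simp
  choose F2 hF2 using hgood
  refine ⟨∑ k ∈ Finset.range (s+1), F2 k * (MvPolynomial.X 0)^k, ?_⟩
  intro u h
  rw [map_sum]
  have hRHS : ∏ j ∈ Finset.Icc 1 s,
      (u - Complex.exp (Complex.I * (n * h : ℝ)) * lemniscateZ s r ℓ a b j h)
      = Polynomial.eval u (∏ j ∈ Finset.Icc 1 s, (Polynomial.X - Polynomial.C (z j h))) := by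
    rw [Polynomial.eval_prod]
    refine Finset.prod_congr rfl fun j _ => ?_
    rw [Polynomial.eval_sub, Polynomial.eval_X, Polynomial.eval_C]
    rfl
  rw [hRHS]
  have hdeg : (∏ j ∈ Finset.Icc 1 s, (Polynomial.X - Polynomial.C (z j h))).natDegree
      < s + 1 := by
    have h1 := Polynomial.natDegree_prod_le (Finset.Icc 1 s)
      (fun j => Polynomial.X - Polynomial.C (z j h))
    have h2 : ∑ j ∈ Finset.Icc 1 s, (Polynomial.X - Polynomial.C (z j h)).natDegree = s := by
      rw [Finset.sum_congr rfl fun j _ => Polynomial.natDegree_X_sub_C (z j h),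
        Finset.sum_const, smul_eq_mul, mul_one, Nat.card_Icc]
      omega
    omega
  rw [Polynomial.eval_eq_sum_range' hdeg]
  refine Finset.sum_congr rfl fun k _ => ?_
  simp only [map_mul, map_pow, MvPolynomial.eval_X, Matrix.cons_val_zero]
  rw [hF2 k u h, hlink]
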